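/- For all ω > 0, each of the three functions φ₀₁(t) = (cosh(ω(1-t)) - 1)/(cosh(ω) - 1), φ₁₁(t) = (cosh(ω) - cosh(ωt) - cosh(ω(1-t)) + 1)/(cosh(ω) - 1), φ₂₁(t) = (cosh(ωt) - 1)/(cosh(ω) - 1) is nonnegative for all t ∈ [0,1]. -/
import Mathlib

open Real

theorem phi_nonneg (ω t : ℝ) (hω : 0 < ω) (ht : t ∈ Set.Icc (0:ℝ) 1) :
    0 ≤ (Real.cosh (ω * (1 - t)) - 1) / (Real.cosh ω - 1) ∧
    0 ≤ (Real.cosh ω - Real.cosh (ω * t) - Real.cosh (ω * (1 - t)) + 1) / (Real.cosh ω - 1) ∧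
    0 ≤ (Real.cosh (ω * t) - 1) / (Real.cosh ω - 1) := by
  obtain ⟨ht0, ht1⟩ := ht
  have hden : 0 < Real.cosh ω - 1 := by
    have := Real.one_lt_cosh.mpr (ne_of_gt hω)
    linarith
  have h1 : 1 ≤ Real.cosh (ω * (1 - t)) := Real.one_le_cosh _
  have h3 : 1 ≤ Real.cosh (ω * t) := Real.one_le_cosh _
  have key : Real.cosh (ω * t) + Real.cosh (ω * (1 - t)) ≤ Real.cosh ω + 1 := by
    have e1 : ω * t = ω / 2 + (ω * t - ω / 2) := by ring
    have e2 : ω * (1 - t) = ω / 2 - (ω * t - ω / 2) := by ring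
    have hA : Real.cosh (ω * t) = Real.cosh (ω/2) * Real.cosh (ω * t - ω / 2) + Real.sinh (ω/2) * Real.sinh (ω * t - ω / 2) := by
      rw [e1, Real.cosh_add]; ring_nf
    have hB : Real.cosh (ω * (1 - t)) = Real.cosh (ω/2) * Real.cosh (ω * t - ω / 2) - Real.sinh (ω/2) * Real.sinh (ω * t - ω / 2) := by
      rw [e2, Real.cosh_sub]
    have hcv : Real.cosh (ω * t - ω / 2) ≤ Real.cosh (ω / 2) := by
      rw [Real.cosh_le_cosh]
      rw [abs_le, abs_of_pos (by linarith : (0:ℝ) < ω / 2)]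
      constructor <;> nlinarith
    have hω2 : Real.cosh ω + 1 = 2 * Real.cosh (ω / 2) ^ 2 := by
      have h2 : ω = 2 * (ω / 2) := by ring
      have := Real.cosh_sq_sub_sinh_sq (ω/2)
      rw [h2, Real.cosh_two_mul]; norm_num; nlinarith [Real.cosh_sq_sub_sinh_sq (ω*(1/2)), Real.cosh_sq_sub_sinh_sq (ω/2)]
    have h0 : 0 < Real.cosh (ω / 2) := Real.cosh_pos _
    nlinarith [Real.cosh_pos (ω * t - ω / 2)]
  refine ⟨div_nonneg (by linarith) hden.le,
    div_nonneg (by linarith) hden.le,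
    div_nonneg (by linarith) hden.le⟩
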